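/- Let G be a generalized 2-Baer group, let x ∈ G \ T₂(G) have infinite order, and let g ∈ G. Then there exists an integer n ≥ 0 such that xⁿg lies in G \ T₂(G) and has infinite order. -/

import Mathlib

/-- A subgroup H is 2-subnormal in G if H ⊴ K ⊴ G for some subgroup K. -/
def IsTwoSubnormal {G : Type*} [Group G] (H : Subgroup G) : Prop :=
  ∃ K : Subgroup G, H ≤ K ∧ (H.subgroupOf K).Normal ∧ K.Normal

/-- T₂(G) is the subgroup generated by all elements whose cyclic subgroup is not
2-subnormal in G. -/
def T2 (G : Type*) [Group G] : Subgroup G :=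
  Subgroup.closure {x : G | ¬ IsTwoSubnormal (Subgroup.zpowers x)}

/-- Key lemma: if `⟨u⟩` is 2-subnormal in `G` and both `u` and `v` have finite order,
then `u * v⁻¹` has finite order. -/
theorem key_lemma {G : Type*} [Group G] {u v : G}
    (hsub : IsTwoSubnormal (Subgroup.zpowers u))
    (hu : IsOfFinOrder u) (hv : IsOfFinOrder v) :
    IsOfFinOrder (u * v⁻¹) := by
  classical
  obtain ⟨K, hle, hnorm, hK⟩ := hsub
  have huK : u ∈ K := hle (Subgroup.mem_zpowers u)
  set n := orderOf v with hn
  have hn0 : n ≠ 0 := hv.orderOf_pos.ne'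
  have hvn : v ^ n = 1 := pow_orderOf_eq_one v
  have hcK : ∀ i : ℕ, (v ^ i)⁻¹ * u * v ^ i ∈ K := by
    intro i
    have := hK.conj_mem u huK (v ^ i)⁻¹
    simpa using this
  set c : ℕ → G := fun i => (v ^ i)⁻¹ * u * v ^ i with hc
  set cK : ℕ → K := fun i => ⟨c i, hcK i⟩ with hcKdef
  have hcKcoe : ∀ i, ((cK i : K) : G) = (v ^ i)⁻¹ * u * v ^ i := fun i => rfl
  have hconjpow : ∀ (i : ℕ) (m : ℤ),
      ((v ^ i)⁻¹ * u * v ^ i) ^ m = (v ^ i)⁻¹ * u ^ m * v ^ i := by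
    intro i m
    simpa using conj_zpow (i := m) (a := (v ^ i)⁻¹) (b := u)
  -- conjugates of `cK i` by elements of `K` stay in `zpowers (cK i)`
  have hconj : ∀ (i : ℕ) (k : K), k * cK i * k⁻¹ ∈ Subgroup.zpowers (cK i) := by
    intro i k
    have hk' : v ^ i * (k : G) * (v ^ i)⁻¹ ∈ K := hK.conj_mem (k : G) k.2 (v ^ i)
    have hu' : (⟨u, huK⟩ : K) ∈ (Subgroup.zpowers u).subgroupOf K := by
      rw [Subgroup.mem_subgroupOf]
      exact Subgroup.mem_zpowers u
    have hmem := hnorm.conj_mem _ hu' (⟨_, hk'⟩ : K)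
    rw [Subgroup.mem_subgroupOf] at hmem
    obtain ⟨m, hm⟩ := Subgroup.mem_zpowers_iff.mp hmem
    have hm2 : u ^ m
        = (v ^ i * (k : G) * (v ^ i)⁻¹) * u * (v ^ i * (k : G) * (v ^ i)⁻¹)⁻¹ := by
      rw [hm]; rfl
    refine Subgroup.mem_zpowers_iff.mpr ⟨m, ?_⟩
    apply Subtype.ext
    have hgoal : ((cK i ^ m : K) : G) = ((v ^ i)⁻¹ * u * v ^ i) ^ m := by
      rw [SubgroupClass.coe_zpow, hcKcoe]
    rw [hgoal, hconjpow i m, hm2]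
    show _ = (k : G) * ((v ^ i)⁻¹ * u * v ^ i) * (k : G)⁻¹
    group
  have hNi : ∀ i, (Subgroup.zpowers (cK i)).Normal := by
    intro i
    constructor
    intro a ha k
    obtain ⟨m, rfl⟩ := Subgroup.mem_zpowers_iff.mp ha
    obtain ⟨m', hm'⟩ := Subgroup.mem_zpowers_iff.mp (hconj i k)
    refine Subgroup.mem_zpowers_iff.mpr ⟨m' * m, ?_⟩
    rw [zpow_mul, hm', conj_zpow]
  -- each `cK i` has finite order
  have hcfin : ∀ i, IsOfFinOrder (cK i) := by
    intro i
    obtain ⟨N, hN0, hN1⟩ := isOfFinOrder_iff_pow_eq_one.mp hu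
    refine isOfFinOrder_iff_pow_eq_one.mpr ⟨N, hN0, ?_⟩
    apply Subtype.ext
    have hgoal : ((cK i ^ N : K) : G) = ((v ^ i)⁻¹ * u * v ^ i) ^ N := by
      rw [SubmonoidClass.coe_pow, hcKcoe]
    rw [hgoal]
    have h2 : ((v ^ i)⁻¹ * u * v ^ i) ^ N = (v ^ i)⁻¹ * u ^ N * v ^ i := by
      simpa using conj_pow (i := N) (a := (v ^ i)⁻¹) (b := u)
    rw [h2, hN1, mul_one, inv_mul_cancel]
    rfl
  -- the partial sups of the `zpowers (cK i)` are finite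
  have hFfin : ∀ m : ℕ,
      ((((Finset.range m).sup fun i => Subgroup.zpowers (cK i)) : Subgroup K) : Set K).Finite := by
    intro m
    induction m with
    | zero => simp
    | succ k ih =>
      rw [Finset.range_add_one, Finset.sup_insert, sup_comm]
      haveI := hNi k
      rw [Subgroup.mul_normal]
      exact Set.Finite.mul ih ((hcfin k).finite_zpowers)
  -- the product of the conjugates lies in the finite subgroup, hence has finite order
  set p : K := ((List.range n).map cK).prod with hp
  have hpF : p ∈ ((Finset.range n).sup fun i => Subgroup.zpowers (cK i)) := by
    apply Subgroup.list_prod_mem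
    intro a ha
    simp only [List.mem_map, List.mem_range] at ha
    obtain ⟨i, hi, rfl⟩ := ha
    exact Finset.le_sup (f := fun i => Subgroup.zpowers (cK i))
      (Finset.mem_range.mpr hi) (Subgroup.mem_zpowers _)
  have hpfin : IsOfFinOrder p := by
    haveI : Finite (((Finset.range n).sup fun i => Subgroup.zpowers (cK i)) : Subgroup K) :=
      Set.Finite.to_subtype (hFfin n)
    have hq := isOfFinOrder_of_finite
      (⟨p, hpF⟩ : (((Finset.range n).sup fun i => Subgroup.zpowers (cK i)) : Subgroup K))
    obtain ⟨N, hN0, hN1⟩ := isOfFinOrder_iff_pow_eq_one.mp hq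
    refine isOfFinOrder_iff_pow_eq_one.mpr ⟨N, hN0, ?_⟩
    simpa using congrArg Subtype.val hN1
  have hpG : IsOfFinOrder ((p : K) : G) := by
    obtain ⟨N, hN0, hN1⟩ := isOfFinOrder_iff_pow_eq_one.mp hpfin
    refine isOfFinOrder_iff_pow_eq_one.mpr ⟨N, hN0, ?_⟩
    simpa using congrArg Subtype.val hN1
  -- the basic power formula
  have hform : ∀ m : ℕ, (u * v⁻¹) ^ m = ((List.range m).map c).prod * (v ^ m)⁻¹ := by
    intro m
    induction m with
    | zero => simp
    | succ k ih =>
      rw [pow_succ, ih, List.range_succ, List.map_append, List.prod_append,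
        List.map_singleton, List.prod_singleton, hc]
      simp only [pow_succ]
      group
  have hcoe : ((p : K) : G) = ((List.range n).map c).prod := by
    rw [hp]
    show K.subtype (((List.range n).map cK).prod) = _
    rw [map_list_prod, List.map_map]
    rfl
  have hfin_pow : IsOfFinOrder ((u * v⁻¹) ^ n) := by
    rw [hform n, hvn, inv_one, mul_one, ← hcoe]
    exact hpG
  exact hfin_pow.of_pow hn0

/-- If G is a generalized 2-Baer group, x ∈ G \ T₂(G) has infinite
order and g ∈ G, then there is n ≥ 0 with xⁿg ∈ G \ T₂(G) of infinite order. -/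
theorem stmt_10 {G : Type*} [Group G] (hG : T2 G ≠ ⊤) (x : G) (hxT : x ∉ T2 G)
    (hx : ¬ IsOfFinOrder x) (g : G) :
    ∃ n : ℕ, x ^ n * g ∉ T2 G ∧ ¬ IsOfFinOrder (x ^ n * g) := by
  -- any element outside T2 has 2-subnormal cyclic subgroup
  have hsubn : ∀ y : G, y ∉ T2 G → IsTwoSubnormal (Subgroup.zpowers y) := by
    intro y hy
    by_contra h
    exact hy (Subgroup.subset_closure h)
  -- find a good exponent in {0, 1}
  have h01 : x ^ (0 : ℕ) * g ∉ T2 G ∨ x ^ (1 : ℕ) * g ∉ T2 G := by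
    by_contra h
    push_neg at h
    obtain ⟨h0, h1⟩ := h
    have : x ^ (1 : ℕ) * g * (x ^ (0 : ℕ) * g)⁻¹ ∈ T2 G := mul_mem h1 (inv_mem h0)
    simp only [pow_one, pow_zero, one_mul, mul_inv_rev, ← mul_assoc,
      mul_inv_cancel_right] at this
    exact hxT this
  have h23 : x ^ (2 : ℕ) * g ∉ T2 G ∨ x ^ (3 : ℕ) * g ∉ T2 G := by
    by_contra h
    push_neg at h
    obtain ⟨h2, h3⟩ := h
    have : x ^ (3 : ℕ) * g * (x ^ (2 : ℕ) * g)⁻¹ ∈ T2 G := mul_mem h3 (inv_mem h2)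
    have heq : x ^ (3 : ℕ) * g * (x ^ (2 : ℕ) * g)⁻¹ = x := by group
    rw [heq] at this
    exact hxT this
  obtain ⟨a, ha1, haT⟩ : ∃ a : ℕ, a ≤ 1 ∧ x ^ a * g ∉ T2 G := by
    rcases h01 with h | h
    · exact ⟨0, by norm_num, h⟩
    · exact ⟨1, le_refl 1, h⟩
  obtain ⟨b, hb2, hbT⟩ : ∃ b : ℕ, 2 ≤ b ∧ x ^ b * g ∉ T2 G := by
    rcases h23 with h | h
    · exact ⟨2, le_refl 2, h⟩
    · exact ⟨3, by norm_num, h⟩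
  have hab : a < b := lt_of_le_of_lt ha1 (lt_of_lt_of_le one_lt_two hb2)
  by_cases hfa : IsOfFinOrder (x ^ a * g)
  · refine ⟨b, hbT, ?_⟩
    intro hfb
    obtain ⟨d, hd0, rfl⟩ : ∃ d : ℕ, d ≠ 0 ∧ b = d + a := ⟨b - a, by omega, by omega⟩
    -- both x^a g and x^b g have finite order; derive that x has finite order
    have hkey := key_lemma (hsubn _ haT) hfa hfb
    have heq : (x ^ a * g) * (x ^ (d + a) * g)⁻¹ = (x ^ d)⁻¹ := by
      rw [pow_add]
      group
    rw [heq] at hkey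
    have hfd : IsOfFinOrder (x ^ d) := by simpa using hkey.inv
    exact hx (hfd.of_pow hd0)
  · exact ⟨a, haT, hfa⟩
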